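/- Let K be a field and H a finite-dimensional K-vector space equipped with an internal direct sum decomposition H = ⊕_{i ∈ ι} H_i into subspaces. Let F and G be two decreasing filtrations of H by subspaces (families of subspaces F^λ, G^λ of H indexed by λ ∈ ℝ with F^μ ⊆ F^λ and G^μ ⊆ G^λ whenever λ ≤ μ) such that every F^λ and every G^λ is a graded subspace, i.e. equals the (internal) sum over i ∈ ι of its intersections with the H_i. Then there exists a basis of H such that every basis vector lies in H_i for some i ∈ ι, and the basis is simultaneously compatible with F and with G: for every λ ∈ ℝ, F^λ is spanned by the set of basis vectors it contains, and likewise G^λ is spanned by the set of basis vectors it contains. -/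

import Mathlib

open Module Submodule

section helpers

variable {K : Type*} [Field K] {V : Type*} [AddCommGroup V] [Module K V]

/-- A chain of submodules of a finite-dimensional space is finite. -/
lemma aux_chain_finite [FiniteDimensional K V] {S : Set (Submodule K V)}
    (h : IsChain (· ≤ ·) S) : S.Finite := by
  have hinj : Set.InjOn (fun W : Submodule K V => finrank K W) S := by
    intro a ha b hb hab
    rcases eq_or_ne a b with h' | h'
    · exact h'
    · rcases h ha hb h' with h'' | h''
      · exact Submodule.eq_of_le_of_finrank_le h'' hab.ge
      · exact (Submodule.eq_of_le_of_finrank_le h'' hab.le).symm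
  have himg : ((fun W : Submodule K V => finrank K W) '' S).Finite := by
    apply Set.Finite.subset (Set.finite_Iic (finrank K V))
    rintro _ ⟨W, _, rfl⟩
    exact Submodule.finrank_le W
  exact Set.Finite.of_finite_image himg hinj

/-- A nonempty chain of submodules of a finite-dimensional space has a least element. -/
lemma aux_chain_min [FiniteDimensional K V] {S : Set (Submodule K V)}
    (h : IsChain (· ≤ ·) S) (hne : S.Nonempty) : ∃ A ∈ S, ∀ W ∈ S, A ≤ W := by
  obtain ⟨A, hA, hmin⟩ := Set.Finite.exists_minimalFor id S (aux_chain_finite h) hne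
  refine ⟨A, hA, fun W hW => ?_⟩
  rcases eq_or_ne A W with rfl | hne'
  · exact le_rfl
  rcases h hA hW hne' with h' | h'
  · exact h'
  · exact hmin hW h'

lemma aux_trivial (hV : Subsingleton V) (F G : ℝ → Submodule K V) :
    ∃ s : Finset V, LinearIndependent K ((↑) : {x // x ∈ s} → V) ∧
      span K ((s : Set V)) = ⊤ ∧
      (∀ l : ℝ, F l = span K ((s : Set V) ∩ (F l : Set V))) ∧
      (∀ l : ℝ, G l = span K ((s : Set V) ∩ (G l : Set V))) := by
  have hsub : Subsingleton (Submodule K V) := by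
    constructor
    intro a b
    ext x
    rw [Subsingleton.elim x 0]
    simp
  refine ⟨∅, ?_, Subsingleton.elim _ _, fun l => Subsingleton.elim _ _,
    fun l => Subsingleton.elim _ _⟩
  have : IsEmpty {x // x ∈ (∅ : Finset V)} := ⟨fun x => (Finset.notMem_empty _ x.2)⟩
  exact linearIndependent_empty_type

end helpers

/-- Key lemma: two decreasing filtrations on a finite-dimensional space admit a common
compatible basis. -/
lemma aux_key {K : Type*} [Field K] (n : ℕ) :
    ∀ {V : Type*} [AddCommGroup V] [Module K V] [FiniteDimensional K V],
      finrank K V ≤ n →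
      ∀ F G : ℝ → Submodule K V,
        (∀ l m : ℝ, l ≤ m → F m ≤ F l) → (∀ l m : ℝ, l ≤ m → G m ≤ G l) →
        ∃ s : Finset V, LinearIndependent K ((↑) : {x // x ∈ s} → V) ∧
          span K ((s : Set V)) = ⊤ ∧
          (∀ l : ℝ, F l = span K ((s : Set V) ∩ (F l : Set V))) ∧
          (∀ l : ℝ, G l = span K ((s : Set V) ∩ (G l : Set V))) := by
  induction n with
  | zero =>
    intro V _ _ _ hn F G _ _
    have hV : Subsingleton V := finrank_zero_iff.mp (Nat.le_zero.mp hn)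
    exact aux_trivial hV F G
  | succ n ih =>
    intro V _ _ _ hn F G hF hG
    classical
    by_cases htriv : Subsingleton V
    · exact aux_trivial htriv F G
    have hnt : Nontrivial V := not_subsingleton_iff_nontrivial.mp htriv
    have hbt : (⊥ : Submodule K V) ≠ ⊤ := bot_ne_top
    -- chain of F-values
    have hCF : IsChain (· ≤ ·) (insert ⊤ (Set.range F) : Set (Submodule K V)) := by
      rintro a (rfl | ⟨l, rfl⟩) b (rfl | ⟨m, rfl⟩) hne
      · exact Or.inl le_rfl
      · exact Or.inr le_top
      · exact Or.inl le_top
      · rcases le_total l m with h | h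
        · exact Or.inr (hF l m h)
        · exact Or.inl (hF m l h)
    have hSF : IsChain (· ≤ ·)
        {W : Submodule K V | W ∈ insert ⊤ (Set.range F) ∧ W ≠ ⊥} :=
      hCF.mono (fun W hW => hW.1)
    obtain ⟨A, hASF, hAmin⟩ := aux_chain_min hSF ⟨⊤, Set.mem_insert _ _, hbt.symm⟩
    have hAbot : A ≠ ⊥ := hASF.2
    have hPA : ∀ l : ℝ, F l ≠ ⊥ → A ≤ F l := fun l hl =>
      hAmin _ ⟨Set.mem_insert_of_mem _ ⟨l, rfl⟩, hl⟩
    -- chain of G-values meeting A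
    have hCG : IsChain (· ≤ ·) (insert ⊤ (Set.range G) : Set (Submodule K V)) := by
      rintro a (rfl | ⟨l, rfl⟩) b (rfl | ⟨m, rfl⟩) hne
      · exact Or.inl le_rfl
      · exact Or.inr le_top
      · exact Or.inl le_top
      · rcases le_total l m with h | h
        · exact Or.inr (hG l m h)
        · exact Or.inl (hG m l h)
    have hSG : IsChain (· ≤ ·)
        {W : Submodule K V | W ∈ insert ⊤ (Set.range G) ∧ A ⊓ W ≠ ⊥} :=
      hCG.mono (fun W hW => hW.1)
    obtain ⟨B, hBSG, hBmin⟩ := aux_chain_min hSG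
      ⟨⊤, Set.mem_insert _ _, by simpa using hAbot⟩
    have hPB : ∀ l : ℝ, A ⊓ G l ≠ ⊥ → B ≤ G l := fun l hl =>
      hBmin _ ⟨Set.mem_insert_of_mem _ ⟨l, rfl⟩, hl⟩
    have hAB : A ⊓ B ≠ ⊥ := hBSG.2
    obtain ⟨v, hvAB, hv0⟩ := Submodule.exists_mem_ne_zero_of_ne_bot hAB
    set N : Submodule K V := span K {v} with hN
    have hvN : v ∈ N := mem_span_singleton_self v
    have hNle : N ≤ A ⊓ B := (span_le (R := K)).mpr (Set.singleton_subset_iff.mpr hvAB)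
    have hNA : N ≤ A := hNle.trans inf_le_left
    have hNB : N ≤ B := hNle.trans inf_le_right
    have hrank : finrank K (V ⧸ N) ≤ n := by
      have h1 : finrank K N = 1 := finrank_span_singleton hv0
      have h2 := Submodule.finrank_quotient_add_finrank N
      omega
    obtain ⟨s', hli', hsp', hF', hG'⟩ := ih hrank
      (fun l => Submodule.map N.mkQ (F l)) (fun l => Submodule.map N.mkQ (G l))
      (fun l m h => Submodule.map_mono (hF l m h))
      (fun l m h => Submodule.map_mono (hG l m h))
    -- lifting
    have hlift : ∀ x' : V ⧸ N, x' ≠ 0 → ∃ z : V, N.mkQ z = x' ∧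
        (∀ l : ℝ, x' ∈ Submodule.map N.mkQ (F l) → z ∈ F l) ∧
        (∀ l : ℝ, x' ∈ Submodule.map N.mkQ (G l) → z ∈ G l) := by
      intro x' hx'
      have hchain : IsChain (· ≤ ·)
          {W : Submodule K V | W ∈ insert ⊤ (Set.range G) ∧ x' ∈ Submodule.map N.mkQ W} :=
        hCG.mono (fun W hW => hW.1)
      have hne : ∃ W, W ∈ {W : Submodule K V |
          W ∈ insert ⊤ (Set.range G) ∧ x' ∈ Submodule.map N.mkQ W} := by
        refine ⟨⊤, Set.mem_insert _ _, ?_⟩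
        rw [Submodule.map_top, Submodule.range_mkQ]
        trivial
      obtain ⟨M, hM, hMmin⟩ := aux_chain_min hchain hne
      obtain ⟨z, hzM, hz⟩ := hM.2
      refine ⟨z, hz, ?_, ?_⟩
      · intro l hl
        obtain ⟨y, hy, hyx⟩ := hl
        have hFl : F l ≠ ⊥ := by
          rintro h
          rw [h] at hy
          apply hx'
          rw [← hyx, (Submodule.mem_bot K).mp hy, map_zero]
        have hNF : N ≤ F l := hNA.trans (hPA l hFl)
        have hzy : z - y ∈ N := by
          rw [← Submodule.ker_mkQ N, LinearMap.mem_ker, map_sub, hz, hyx, sub_self]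
        have heq : y + (z - y) = z := by abel
        rw [← heq]
        exact (F l).add_mem hy (hNF hzy)
      · intro l hl
        exact hMmin (G l) ⟨Set.mem_insert_of_mem _ ⟨l, rfl⟩, hl⟩ hzM
    let zf : V ⧸ N → V := fun x' =>
      if h : x' = 0 then 0 else Classical.choose (hlift x' h)
    have hzf : ∀ x' : V ⧸ N, x' ≠ 0 → N.mkQ (zf x') = x' ∧
        (∀ l : ℝ, x' ∈ Submodule.map N.mkQ (F l) → zf x' ∈ F l) ∧
        (∀ l : ℝ, x' ∈ Submodule.map N.mkQ (G l) → zf x' ∈ G l) := by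
      intro x' h
      simp only [zf, dif_neg h]
      exact Classical.choose_spec (hlift x' h)
    have hne0 : ∀ x' ∈ s', x' ≠ 0 := fun x' hx' => hli'.ne_zero ⟨x', hx'⟩
    have hπz : ∀ x' ∈ s', N.mkQ (zf x') = x' := fun x' hx' => (hzf x' (hne0 x' hx')).1
    set s : Finset V := insert v (s'.image zf) with hs_def
    -- mkQ kills v
    have hπv : N.mkQ v = 0 := (Submodule.Quotient.mk_eq_zero N).mpr hvN
    have hvs : v ∈ s := Finset.mem_insert_self _ _
    -- span
    have hss : ∀ x' ∈ s', zf x' ∈ s := fun x' hx' =>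
      Finset.mem_insert_of_mem (Finset.mem_image_of_mem _ hx')
    have hspan : span K (s : Set V) = ⊤ := by
      have hsub : (s' : Set (V ⧸ N)) ⊆ ⇑N.mkQ '' (s : Set V) := by
        intro x' hx'
        exact ⟨zf x', hss x' hx', hπz x' hx'⟩
      have hmap : Submodule.map N.mkQ (span K (s : Set V)) = ⊤ := by
        rw [Submodule.map_span]
        rw [← top_le_iff, ← hsp']
        exact span_mono hsub
      have h2 := congrArg (Submodule.comap N.mkQ) hmap
      rw [Submodule.comap_map_eq, Submodule.ker_mkQ, Submodule.comap_top] at h2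
      have hNs : N ≤ span K (s : Set V) :=
        (span_le (R := K)).mpr (Set.singleton_subset_iff.mpr (subset_span hvs))
      rwa [sup_eq_left.mpr hNs] at h2
    -- cardinality
    have hvnot : v ∉ s'.image zf := by
      intro h
      obtain ⟨x', hx', hzx⟩ := Finset.mem_image.mp h
      apply hne0 x' hx'
      rw [← hπz x' hx', hzx, hπv]
    have hcard : s.card = finrank K V := by
      have hinj : Set.InjOn zf (s' : Set (V ⧸ N)) := by
        intro a ha b hb hab
        rw [← hπz a ha, ← hπz b hb, hab]
      have h1 : (s'.image zf).card = s'.card := Finset.card_image_of_injOn hinj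
      have hb' : Basis {x // x ∈ s'} K (V ⧸ N) := Basis.mk hli' (by
        rw [Subtype.range_coe_subtype]
        rw [show {x | x ∈ s'} = (s' : Set (V ⧸ N)) from rfl, hsp'])
      have h2 : s'.card = finrank K (V ⧸ N) := by
        rw [finrank_eq_card_basis hb', Fintype.card_coe]
      have h3 : finrank K N = 1 := finrank_span_singleton hv0
      have h4 := Submodule.finrank_quotient_add_finrank N
      rw [hs_def, Finset.card_insert_of_notMem hvnot, h1]
      omega
    have hli : LinearIndependent K ((↑) : {x // x ∈ s} → V) := by
      apply linearIndependent_of_top_le_span_of_card_eq_finrank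
      · rw [Subtype.range_coe_subtype, show {x | x ∈ s} = (s : Set V) from rfl, hspan]
      · rw [Fintype.card_coe, hcard]
    refine ⟨s, hli, hspan, ?_, ?_⟩
    · -- F compatibility
      intro l
      refine le_antisymm ?_ ((span_le (R := K)).mpr (fun x hx => hx.2))
      intro x hx
      by_cases hFl : F l = ⊥
      · rw [hFl] at hx
        rw [(Submodule.mem_bot K).mp hx]
        exact zero_mem _
      have hNF : N ≤ F l := hNA.trans (hPA l hFl)
      have hvF : v ∈ F l := hNF hvN
      set W : Submodule K V := span K ((s : Set V) ∩ (F l : Set V)) with hW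
      have hNW : N ≤ W := (span_le (R := K)).mpr
        (Set.singleton_subset_iff.mpr (subset_span ⟨hvs, hvF⟩))
      have hle : span K ((s' : Set (V ⧸ N)) ∩ (Submodule.map N.mkQ (F l) : Set (V ⧸ N)))
          ≤ Submodule.map N.mkQ W := by
        apply (span_le (R := K)).mpr
        rintro x' ⟨hx's, hx'F⟩
        exact ⟨zf x', subset_span ⟨hss x' hx's, (hzf x' (hne0 x' hx's)).2.1 l hx'F⟩,
          hπz x' hx's⟩
      have hmem : N.mkQ x ∈ Submodule.map N.mkQ W := by
        apply hle
        rw [← hF' l]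
        exact Submodule.mem_map_of_mem hx
      have : x ∈ Submodule.comap N.mkQ (Submodule.map N.mkQ W) := hmem
      rwa [Submodule.comap_map_eq, Submodule.ker_mkQ, sup_eq_left.mpr hNW] at this
    · -- G compatibility
      intro l
      refine le_antisymm ?_ ((span_le (R := K)).mpr (fun x hx => hx.2))
      intro x hx
      by_cases hGl : G l = ⊥
      · rw [hGl] at hx
        rw [(Submodule.mem_bot K).mp hx]
        exact zero_mem _
      set W : Submodule K V := span K ((s : Set V) ∩ (G l : Set V)) with hW
      have hWG : W ≤ G l := (span_le (R := K)).mpr (fun y hy => hy.2)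
      have hle : span K ((s' : Set (V ⧸ N)) ∩ (Submodule.map N.mkQ (G l) : Set (V ⧸ N)))
          ≤ Submodule.map N.mkQ W := by
        apply (span_le (R := K)).mpr
        rintro x' ⟨hx's, hx'G⟩
        exact ⟨zf x', subset_span ⟨hss x' hx's, (hzf x' (hne0 x' hx's)).2.2 l hx'G⟩,
          hπz x' hx's⟩
      have hmem : N.mkQ x ∈ Submodule.map N.mkQ W := by
        apply hle
        rw [← hG' l]
        exact Submodule.mem_map_of_mem hx
      have hx2 : x ∈ W ⊔ N := by
        have : x ∈ Submodule.comap N.mkQ (Submodule.map N.mkQ W) := hmem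
        rwa [Submodule.comap_map_eq, Submodule.ker_mkQ] at this
      by_cases hBl : A ⊓ G l = ⊥
      · -- deep case: N ∩ G l = 0
        obtain ⟨w, hw, nn, hnn, rfl⟩ := Submodule.mem_sup.mp hx2
        have hnnG : nn ∈ G l := by
          have := (G l).sub_mem hx (hWG hw)
          simpa using this
        have : nn ∈ A ⊓ G l := ⟨hNA hnn, hnnG⟩
        rw [hBl, Submodule.mem_bot] at this
        rw [this, add_zero]
        exact hw
      · have hvG : v ∈ G l := (hNB.trans (hPB l hBl)) hvN
        have hNW : N ≤ W := (span_le (R := K)).mpr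
          (Set.singleton_subset_iff.mpr (subset_span ⟨hvs, hvG⟩))
        rwa [sup_eq_left.mpr hNW] at hx2

theorem stmt_12 {K : Type*} [Field K] {H : Type*} [AddCommGroup H] [Module K H]
    [FiniteDimensional K H] {ι : Type*} [DecidableEq ι]
    (Hgr : ι → Submodule K H) (hinternal : DirectSum.IsInternal Hgr)
    (F G : ℝ → Submodule K H)
    (hF : ∀ lam mu : ℝ, lam ≤ mu → F mu ≤ F lam)
    (hG : ∀ lam mu : ℝ, lam ≤ mu → G mu ≤ G lam)
    (hFgr : ∀ lam : ℝ, F lam = ⨆ i : ι, F lam ⊓ Hgr i)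
    (hGgr : ∀ lam : ℝ, G lam = ⨆ i : ι, G lam ⊓ Hgr i) :
    ∃ s : Finset H,
      LinearIndependent K ((↑) : {x // x ∈ s} → H) ∧
      Submodule.span K (s : Set H) = ⊤ ∧
      (∀ v ∈ s, ∃ i : ι, v ∈ Hgr i) ∧
      (∀ lam : ℝ, F lam = Submodule.span K ((s : Set H) ∩ (F lam : Set H))) ∧
      (∀ lam : ℝ, G lam = Submodule.span K ((s : Set H) ∩ (G lam : Set H))) := by
  classical
  have hkey : ∀ i : ι, ∃ si : Finset ↥(Hgr i),
      LinearIndependent K ((↑) : {x // x ∈ si} → ↥(Hgr i)) ∧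
      Submodule.span K ((si : Set ↥(Hgr i))) = ⊤ ∧
      (∀ l : ℝ, Submodule.comap (Hgr i).subtype (F l) =
        Submodule.span K ((si : Set ↥(Hgr i)) ∩ (Submodule.comap (Hgr i).subtype (F l) : Set ↥(Hgr i)))) ∧
      (∀ l : ℝ, Submodule.comap (Hgr i).subtype (G l) =
        Submodule.span K ((si : Set ↥(Hgr i)) ∩ (Submodule.comap (Hgr i).subtype (G l) : Set ↥(Hgr i)))) := by
    intro i
    exact aux_key (Module.finrank K ↥(Hgr i)) le_rfl _ _
      (fun l m h => Submodule.comap_mono (hF l m h))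
      (fun l m h => Submodule.comap_mono (hG l m h))
  choose si hli hsp hFi hGi using hkey
  let bi : ∀ i : ι, Basis {x // x ∈ si i} K ↥(Hgr i) := fun i =>
    Basis.mk (hli i) (by
      rw [Subtype.range_coe_subtype, show {x | x ∈ si i} = (si i : Set ↥(Hgr i)) from rfl,
        hsp i])
  have hbi : ∀ (i : ι) (j : {x // x ∈ si i}), bi i j = (j : ↥(Hgr i)) := fun i j =>
    Basis.mk_apply _ _ _
  let b : Basis (Σ i : ι, {x // x ∈ si i}) K H := hinternal.collectedBasis bi
  have hb : ∀ p : Σ i : ι, {x // x ∈ si i}, b p = ((bi p.1 p.2 : ↥(Hgr p.1)) : H) := by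
    intro p
    rw [show ⇑b = fun p : Σ i : ι, {x // x ∈ si i} => ((bi p.1 p.2 : ↥(Hgr p.1)) : H) from
      hinternal.collectedBasis_coe bi]
  haveI : Fintype (Σ i : ι, {x // x ∈ si i}) := FiniteDimensional.fintypeBasisIndex b
  let s : Finset H := Finset.image ⇑b Finset.univ
  have hs : (s : Set H) = Set.range ⇑b := by
    rw [Finset.coe_image, Finset.coe_univ, Set.image_univ]
  refine ⟨s, ?_, ?_, ?_, ?_, ?_⟩
  · have hbl := (linearIndepOn_id_range_iff b.linearIndependent.injective).mpr b.linearIndependent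
    rw [← hs] at hbl
    exact hbl
  · rw [hs]; exact b.span_eq
  · intro x hx
    have hx' : x ∈ Set.range ⇑b := by rw [← hs]; exact hx
    obtain ⟨p, rfl⟩ := hx'
    exact ⟨p.1, by rw [hb p]; exact (bi p.1 p.2).2⟩
  · intro l
    refine le_antisymm ?_ ((Submodule.span_le (R := K)).mpr (fun x hx => hx.2))
    refine le_trans (le_of_eq (hFgr l)) (iSup_le fun i => ?_)
    have heq : F l ⊓ Hgr i =
        Submodule.map (Hgr i).subtype (Submodule.comap (Hgr i).subtype (F l)) := by
      rw [Submodule.map_comap_subtype, inf_comm]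
    rw [heq, hFi i l, Submodule.map_span]
    apply (Submodule.span_le (R := K)).mpr
    rintro _ ⟨y, ⟨hys, hyF⟩, rfl⟩
    apply Submodule.subset_span
    refine ⟨?_, hyF⟩
    have hbmem : b ⟨i, ⟨y, hys⟩⟩ ∈ s := Finset.mem_image_of_mem _ (Finset.mem_univ _)
    have heq2 : b ⟨i, ⟨y, hys⟩⟩ = (Hgr i).subtype y := by rw [hb, hbi]; rfl
    exact Finset.mem_coe.mpr (heq2 ▸ hbmem)
  · intro l
    refine le_antisymm ?_ ((Submodule.span_le (R := K)).mpr (fun x hx => hx.2))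
    refine le_trans (le_of_eq (hGgr l)) (iSup_le fun i => ?_)
    have heq : G l ⊓ Hgr i =
        Submodule.map (Hgr i).subtype (Submodule.comap (Hgr i).subtype (G l)) := by
      rw [Submodule.map_comap_subtype, inf_comm]
    rw [heq, hGi i l, Submodule.map_span]
    apply (Submodule.span_le (R := K)).mpr
    rintro _ ⟨y, ⟨hys, hyG⟩, rfl⟩
    apply Submodule.subset_span
    refine ⟨?_, hyG⟩
    have hbmem : b ⟨i, ⟨y, hys⟩⟩ ∈ s := Finset.mem_image_of_mem _ (Finset.mem_univ _)
    have heq2 : b ⟨i, ⟨y, hys⟩⟩ = (Hgr i).subtype y := by rw [hb, hbi]; rfl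
    exact Finset.mem_coe.mpr (heq2 ▸ hbmem)
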